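/- Let $a, b, c$ be complex numbers and let $M_n(a,b,c)$ be the $n \times n$ matrix with entries $m'_{ij} = \prod_{s=1}^{i-1} \frac{a(s+j)+b}{s+j+c}$. Then, assuming all denominators are nonzero, $\det M_n(a,b,c) = \frac{\prod_{i=1}^{n-1} i! \, [a(i-1)+ac-b]^{n-i}}{\prod_{i=1}^{n-1} [i+1+c]^i \, [2n-i+c]^i}$. -/

import Mathlib

open Finset Polynomial

/-- The matrix `M n a b c` with `(i,j)` entry (1-based) `∏_{s=1}^{i-1} (a(s+j)+b)/(s+j+c)`. -/
noncomputable def Mmat (n : ℕ) (a b c : ℂ) : Matrix (Fin n) (Fin n) ℂ :=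
  Matrix.of fun i j =>
    ∏ s ∈ Finset.Icc 1 (i : ℕ), (a * ((s : ℂ) + ((j : ℕ) + 1)) + b) / ((s : ℂ) + ((j : ℕ) + 1) + c)

lemma prodIccRange {M : Type*} [CommMonoid M] (f : ℕ → M) (m : ℕ) :
    ∏ i ∈ Icc 1 m, f i = ∏ k ∈ range m, f (k + 1) := by
  induction m with
  | zero => simp
  | succ m ih =>
    rw [Finset.prod_Icc_succ_top (by omega), ih, prod_range_succ]

section main
variable (a b c : ℂ) (m : ℕ)

noncomputable def Pp (i : ℕ) : Polynomial ℂ :=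
  (∏ s ∈ Icc 1 i, (C a * X + C (a * s + b))) * ∏ s ∈ Icc (i+1) m, (X + C ((s : ℂ) + c))

lemma Pp_natDegree_lt (i : ℕ) (hi : i ≤ m) : (Pp a b c m i).natDegree < m + 1 := by
  have h1 : (∏ s ∈ Icc 1 i, (C a * X + C (a * (s:ℕ) + b))).natDegree ≤ i := by
    refine le_trans (Polynomial.natDegree_prod_le _ _) ?_
    refine le_trans (Finset.sum_le_card_nsmul _ _ 1 fun s _ => natDegree_linear_le) ?_
    simp [Nat.card_Icc]
  have h2 : (∏ s ∈ Icc (i+1) m, (X + C ((s:ℕ) + c))).natDegree ≤ m - i := by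
    refine le_trans (Polynomial.natDegree_prod_le _ _) ?_
    refine le_trans (Finset.sum_le_card_nsmul _ _ 1 fun s _ => ?_) ?_
    · exact le_of_eq (natDegree_X_add_C _)
    · simp [Nat.card_Icc]
  have := Polynomial.natDegree_mul_le (p := ∏ s ∈ Icc 1 i, (C a * X + C (a * (s:ℕ) + b)))
    (q := ∏ s ∈ Icc (i+1) m, (X + C ((s:ℕ) + c)))
  unfold Pp
  omega

lemma Pp_eval (i : ℕ) (z : ℂ) :
    (Pp a b c m i).eval z
      = (∏ s ∈ Icc 1 i, (a * z + (a * s + b))) * ∏ s ∈ Icc (i+1) m, (z + ((s:ℕ) + c)) := by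
  unfold Pp
  simp [eval_prod]

lemma evalMat_eq (v : Fin (m+1) → ℂ) :
    (Matrix.of fun i j : Fin (m+1) => (Pp a b c m i).eval (v j)).det
      = (Matrix.of fun i k : Fin (m+1) => (Pp a b c m (i:ℕ)).coeff k).det
        * (Matrix.vandermonde v).det := by
  rw [← Matrix.det_transpose (Matrix.vandermonde v), ← Matrix.det_mul]
  congr 1
  ext i j
  rw [Matrix.mul_apply]
  simp only [Matrix.of_apply, Matrix.transpose_apply, Matrix.vandermonde]
  rw [Polynomial.eval_eq_sum_range' (Pp_natDegree_lt a b c m i (by omega)) (v j)]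
  rw [← Fin.sum_univ_eq_sum_range (fun k => (Pp a b c m (i:ℕ)).coeff k * (v j) ^ k) (m+1)]

end main

section tri
variable (a b c : ℂ) (m : ℕ)

noncomputable def Ay : Matrix (Fin (m+1)) (Fin (m+1)) ℂ :=
  Matrix.of fun i j => (Pp a b c m (i:ℕ)).eval (-((j:ℕ):ℂ) - 1 - c)

noncomputable def Bm : Matrix (Fin (m+1)) (Fin (m+1)) ℂ :=
  (Ay a b c m).submatrix id ⇑(finRotate (m+1))⁻¹

lemma finRotate_inv_apply (j : Fin (m+1)) : (finRotate (m+1))⁻¹ j = j - 1 := by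
  rw [Equiv.Perm.inv_def, Equiv.symm_apply_eq, finRotate_succ_apply, sub_add_cancel]

lemma det_Ay : (Ay a b c m).det = ((-1 : ℂ))^m * (Bm a b c m).det := by
  have h1 : (Bm a b c m).submatrix id ⇑(finRotate (m+1)) = Ay a b c m := by
    ext i j
    simp only [Bm, Matrix.submatrix_apply, id_eq, finRotate_succ_apply, finRotate_inv_apply,
      add_sub_cancel_right]
  rw [← h1, Matrix.det_permute', sign_finRotate]
  norm_num

lemma Bm_tri : ∀ i j : Fin (m+1), i < j → Bm a b c m i j = 0 := by
  intro i j hij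
  have hj0 : j ≠ 0 := by
    intro h; subst h; exact absurd hij (by simp [Fin.lt_iff_val_lt_val])
  have hjv : 1 ≤ (j:ℕ) := by
    rcases Nat.eq_zero_or_pos (j:ℕ) with h | h
    · exact absurd (Fin.ext h : j = 0) hj0
    · exact h
  have hc : (((j - 1 : Fin (m+1)) : ℕ)) = (j:ℕ) - 1 := by
    rw [Fin.coe_sub_one, if_neg hj0]
  simp only [Bm, Matrix.submatrix_apply, id_eq, finRotate_inv_apply]
  simp only [Ay, Matrix.of_apply, hc, Pp_eval]
  apply mul_eq_zero_of_right
  refine Finset.prod_eq_zero (i := (j:ℕ)) ?_ ?_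
  · rw [mem_Icc]
    exact ⟨by exact_mod_cast Nat.succ_le_of_lt (Fin.lt_iff_val_lt_val.mp hij), Nat.lt_succ_iff.mp j.isLt⟩
  · have : (((j:ℕ) - 1 : ℕ) : ℂ) = ((j:ℕ) : ℂ) - 1 := by
      push_cast [Nat.cast_sub hjv]; ring
    rw [this]; ring

lemma det_Bm : (Bm a b c m).det = ∏ i : Fin (m+1), Bm a b c m i i := by
  apply Matrix.det_of_lowerTriangular
  intro i j h
  exact Bm_tri a b c m i j h

end tri


lemma factProd (m : ℕ) :
    (m.factorial : ℂ) * ∏ k ∈ range m, (k.factorial : ℂ)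
      = ∏ i ∈ Icc 1 m, (i.factorial : ℂ) := by
  rw [prodIccRange]
  have : ∀ k : ℕ, ((k+1).factorial : ℂ) = (k+1 : ℕ) * (k.factorial : ℂ) := by
    intro k; push_cast [Nat.factorial_succ]; ring
  simp_rw [this, prod_mul_distrib]
  rw [show ∏ x ∈ range m, ((x + 1 : ℕ) : ℂ) = ((∏ x ∈ range m, (x+1) : ℕ) : ℂ) by push_cast; rfl,
    prod_range_add_one_eq_factorial]

lemma powProd (g : ℕ → ℂ) (m : ℕ) :
    ∏ k ∈ range m, ∏ t ∈ range (k + 1), g t = ∏ t ∈ range m, g t ^ (m - t) := by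
  induction m with
  | zero => simp
  | succ m ih =>
    rw [prod_range_succ, ih]
    have h1 : ∀ t ∈ range (m+1), g t ^ (m + 1 - t) = g t ^ (m - t) * g t := by
      intro t ht; rw [mem_range] at ht
      rw [← pow_succ]; congr 1; omega
    rw [prod_congr rfl h1, prod_mul_distrib]
    conv_rhs => rw [prod_range_succ]
    rw [Nat.sub_self, pow_zero, mul_one]

lemma denEq (h : ℕ → ℂ) (m : ℕ) :
    ∏ j ∈ range (m+1), ∏ s ∈ Icc 1 m, h (s + j + 1)
      = ∏ i ∈ Icc 1 m, (h (i+1)) ^ i * (h (2*(m+1) - i)) ^ i := by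
  set n := m + 1 with hn
  rw [← Finset.prod_product']
  rw [prod_mul_distrib]
  have hS1 : ∏ i ∈ Icc 1 m, (h (i+1)) ^ i
      = ∏ x ∈ (Icc 1 m).sigma (fun i => range i), h (x.1 + 1) := by
    rw [Finset.prod_sigma]
    exact prod_congr rfl fun i _ => by simp
  have hS2 : ∏ i ∈ Icc 1 m, (h (2*n - i)) ^ i
      = ∏ x ∈ (Icc 1 m).sigma (fun i => range i), h (2*n - x.1) := by
    rw [Finset.prod_sigma]
    exact prod_congr rfl fun i _ => by simp
  rw [hS1, hS2]
  rw [← prod_filter_mul_prod_filter_not (range n ×ˢ Icc 1 m) (fun p => p.1 + p.2 ≤ m)]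
  congr 1
  · refine Finset.prod_nbij' (fun p => ⟨p.1 + p.2, p.1⟩) (fun x => (x.2, x.1 - x.2)) ?_ ?_ ?_ ?_ ?_
    · rintro ⟨j, s⟩ hp
      simp only [mem_filter, mem_product, mem_range, mem_Icc, Finset.mem_sigma] at hp ⊢
      omega
    · rintro ⟨i, t⟩ hx
      simp only [mem_filter, mem_product, mem_range, mem_Icc, Finset.mem_sigma] at hx ⊢
      omega
    · rintro ⟨j, s⟩ hp
      simp only [mem_filter, mem_product, mem_range, mem_Icc] at hp
      show ((j : ℕ), (j + s) - j) = (j, s)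
      have : j + s - j = s := by omega
      rw [this]
    · rintro ⟨i, t⟩ hx
      simp only [Finset.mem_sigma, mem_Icc, mem_range] at hx
      exact Sigma.ext (by dsimp; omega) (heq_of_eq rfl)
    · rintro ⟨j, s⟩ hp
      simp only [mem_filter, mem_product, mem_range, mem_Icc] at hp
      show h (s + j + 1) = h (j + s + 1)
      congr 1; omega
  · refine Finset.prod_nbij' (fun p => ⟨2*n - 1 - (p.1 + p.2), n - 1 - p.2⟩)
      (fun x => (n - x.1 + x.2, n - 1 - x.2)) ?_ ?_ ?_ ?_ ?_
    · rintro ⟨j, s⟩ hp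
      simp only [mem_filter, mem_product, mem_range, mem_Icc, Finset.mem_sigma] at hp ⊢
      omega
    · rintro ⟨i, t⟩ hx
      simp only [mem_filter, mem_product, mem_range, mem_Icc, Finset.mem_sigma] at hx ⊢
      omega
    · rintro ⟨j, s⟩ hp
      simp only [mem_filter, mem_product, mem_range, mem_Icc] at hp
      show (n - (2*n - 1 - (j + s)) + (n - 1 - s), n - 1 - (n - 1 - s)) = (j, s)
      have h1 : n - (2*n - 1 - (j + s)) + (n - 1 - s) = j := by omega
      have h2 : n - 1 - (n - 1 - s) = s := by omega
      rw [h1, h2]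
    · rintro ⟨i, t⟩ hx
      simp only [Finset.mem_sigma, mem_Icc, mem_range] at hx
      have h2 : n - 1 - (n - 1 - t) = t := by omega
      refine Sigma.ext (by dsimp; omega) (heq_of_eq (by dsimp; omega))
    · rintro ⟨j, s⟩ hp
      simp only [mem_filter, mem_product, mem_range, mem_Icc] at hp
      show h (s + j + 1) = h (2*n - (2*n - 1 - (j + s)))
      congr 1; omega

lemma shiftProd (d : ℕ) : ∀ l : ℕ, ∏ s ∈ Icc (d+1) (d+l), ((s:ℂ) - d) = (l.factorial : ℂ)
  | 0 => by simp
  | (l+1) => by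
    rw [show d + (l+1) = (d+l) + 1 by omega, Finset.prod_Icc_succ_top (by omega), shiftProd d l]
    push_cast [Nat.factorial_succ]
    ring

section diag
variable (a b c : ℂ) (m : ℕ)

lemma prodIccDesc : ∏ s ∈ Icc 1 m, (((s:ℕ):ℂ) - ((m:ℂ)+1)) = (-1:ℂ)^m * (m.factorial : ℂ) := by
  rw [prodIccRange (fun s => ((s:ℕ):ℂ) - ((m:ℂ)+1)) m]
  have h1 : ∀ k ∈ range m, (((k+1:ℕ)):ℂ) - ((m:ℂ)+1) = (-1) * (((m-k : ℕ)):ℂ) := by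
    intro k hk; rw [mem_range] at hk; push_cast [Nat.cast_sub hk.le]; ring
  rw [prod_congr rfl h1, prod_mul_distrib, prod_const, card_range]
  congr 1
  have h2 : ∏ k ∈ range m, ((m : ℕ) - k) = m.factorial := by
    rw [← prod_range_add_one_eq_factorial m, ← prod_range_reflect (fun j => j + 1) m]
    exact prod_congr rfl fun j hj => by rw [mem_range] at hj; omega
  rw [← h2]
  push_cast
  rfl

lemma Bm_diag_zero :
    Bm a b c m 0 0 = ((-1:ℂ))^m * (m.factorial : ℂ) := by
  have hval : (((0 - 1 : Fin (m+1))) : ℕ) = m := by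
    rw [Fin.coe_sub_one, if_pos rfl]
  simp only [Bm, Matrix.submatrix_apply, id_eq, finRotate_inv_apply, Ay, Matrix.of_apply,
    hval, Pp_eval, Fin.val_zero]
  rw [show Icc 1 0 = (∅ : Finset ℕ) by simp, prod_empty, one_mul]
  rw [show (0:ℕ)+1 = 1 by rfl]
  rw [← prodIccDesc m]
  exact prod_congr rfl fun s _ => by push_cast; ring

lemma Bm_diag_succ (k : Fin m) :
    Bm a b c m k.succ k.succ
      = ((-1:ℂ))^((k:ℕ)+1) * (∏ t ∈ range ((k:ℕ)+1), (a*(t:ℂ) + a*c - b))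
          * (((m - 1 - (k:ℕ)).factorial : ℂ)) := by
  have hval : (((k.succ - 1 : Fin (m+1))) : ℕ) = (k : ℕ) := by
    rw [Fin.coe_sub_one, if_neg (Fin.succ_ne_zero k)]
    simp
  simp only [Bm, Matrix.submatrix_apply, id_eq, finRotate_inv_apply, Ay, Matrix.of_apply,
    hval, Pp_eval, Fin.val_succ]
  have h1 : ∀ s ∈ Icc 1 ((k:ℕ)+1),
      a * (-((k:ℕ):ℂ) - 1 - c) + (a * (s:ℕ) + b)
        = (-1) * (a * ((((k:ℕ)+1-s : ℕ)):ℂ) + a*c - b) := by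
    intro s hs; rw [mem_Icc] at hs
    push_cast [Nat.cast_sub hs.2]
    ring
  rw [prod_congr rfl h1, prod_mul_distrib, prod_const, Nat.card_Icc]
  have h2 : ∏ s ∈ Icc 1 ((k:ℕ)+1), (a * ((((k:ℕ)+1-s : ℕ)):ℂ) + a*c - b)
      = ∏ t ∈ range ((k:ℕ)+1), (a*(t:ℂ) + a*c - b) := by
    rw [prodIccRange (fun s => (a * ((((k:ℕ)+1-s : ℕ)):ℂ) + a*c - b)) ((k:ℕ)+1)]
    rw [← prod_range_reflect (fun t => (a*(t:ℂ) + a*c - b)) ((k:ℕ)+1)]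
    refine prod_congr rfl fun j hj => ?_
    rw [mem_range] at hj
    rw [show (k:ℕ) + 1 - (j+1) = (k:ℕ) + 1 - 1 - j from by omega]
  have h3 : ∏ s ∈ Icc ((k:ℕ)+1+1) m, (-((k:ℕ):ℂ) - 1 - c + ((s:ℕ) + c))
      = (((m - 1 - (k:ℕ)).factorial : ℂ)) := by
    have hIcc : Icc ((k:ℕ)+1+1) m = Icc (((k:ℕ)+1)+1) (((k:ℕ)+1) + (m - 1 - (k:ℕ))) := by
      congr 1
      have := k.isLt
      omega
    rw [hIcc, ← shiftProd ((k:ℕ)+1) (m - 1 - (k:ℕ))]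
    refine prod_congr rfl fun s _ => ?_
    push_cast
    ring
  rw [h2, h3, show (k:ℕ)+1+1-1 = (k:ℕ)+1 by omega]

end diag

section asm
variable (a b c : ℂ) (m : ℕ)

noncomputable def Am : Matrix (Fin (m+1)) (Fin (m+1)) ℂ :=
  Matrix.of fun i j => (Pp a b c m (i:ℕ)).eval (((j:ℕ):ℂ) + 1)

lemma vand_sign :
    (Matrix.vandermonde (fun j : Fin (m+1) => -((j:ℕ):ℂ) - 1 - c)).det
      = (-1:ℂ)^(∑ i : Fin (m+1), (Ioi i).card)
        * (Matrix.vandermonde (fun j : Fin (m+1) => ((j:ℕ):ℂ) + 1)).det := by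
  rw [Matrix.det_vandermonde, Matrix.det_vandermonde, ← prod_pow_eq_pow_sum, ← prod_mul_distrib]
  refine prod_congr rfl fun i _ => ?_
  rw [← prod_const, ← prod_mul_distrib]
  exact prod_congr rfl fun j _ => by ring

lemma neg_one_sq_pow (N : ℕ) : (-1:ℂ)^N * (-1:ℂ)^N = 1 := by
  rw [← mul_pow]; norm_num

lemma det_Am_eq_Ay : (Am a b c m).det
    = (-1:ℂ)^(∑ i : Fin (m+1), (Ioi i).card) * (Ay a b c m).det := by
  have h1 := evalMat_eq a b c m (fun j => ((j:ℕ):ℂ) + 1)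
  have h2 := evalMat_eq a b c m (fun j => -((j:ℕ):ℂ) - 1 - c)
  have e1 : (Am a b c m).det
      = (Matrix.of fun i k : Fin (m+1) => (Pp a b c m (i:ℕ)).coeff k).det
        * (Matrix.vandermonde (fun j : Fin (m+1) => ((j:ℕ):ℂ) + 1)).det := h1
  have e2 : (Ay a b c m).det
      = (Matrix.of fun i k : Fin (m+1) => (Pp a b c m (i:ℕ)).coeff k).det
        * (Matrix.vandermonde (fun j : Fin (m+1) => -((j:ℕ):ℂ) - 1 - c)).det := h2
  rw [e1, e2, vand_sign]
  set N := ∑ i : Fin (m+1), (Ioi i).card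
  rw [show ∀ d v : ℂ, (-1:ℂ)^N * (d * ((-1:ℂ)^N * v)) = ((-1:ℂ)^N * (-1:ℂ)^N) * (d * v)
    from fun d v => by ring, neg_one_sq_pow]
  ring

lemma Ecard : (∑ i : Fin (m+1), (Ioi i).card) = ∑ k ∈ range m, (k+1) := by
  simp only [Fin.card_Ioi]
  rw [Fin.sum_univ_eq_sum_range (fun i => m + 1 - 1 - i) (m+1)]
  rw [show (∑ i ∈ range (m+1), (m + 1 - 1 - i)) = ∑ i ∈ range (m+1), i from
    Finset.sum_range_reflect (fun i => i) (m+1)]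
  rw [Finset.sum_range_succ' (fun i => i) m]
  simp

lemma det_Am_val : (Am a b c m).det
    = (m.factorial:ℂ) * (∏ k ∈ range m, (k.factorial:ℂ))
        * ∏ k ∈ range m, ∏ t ∈ range (k+1), (a*(t:ℂ) + a*c - b) := by
  rw [det_Am_eq_Ay, det_Ay, det_Bm, Fin.prod_univ_succ, Bm_diag_zero]
  have hsucc : ∏ k : Fin m, Bm a b c m k.succ k.succ
      = ∏ k ∈ range m, ((-1:ℂ)^(k+1) * (∏ t ∈ range (k+1), (a*(t:ℂ) + a*c - b))
          * (((m-1-k).factorial : ℂ))) := by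
    rw [← Fin.prod_univ_eq_prod_range]
    exact prod_congr rfl fun k _ => Bm_diag_succ a b c m k
  rw [hsucc]
  rw [prod_mul_distrib, prod_mul_distrib, prod_pow_eq_pow_sum]
  rw [show ∏ k ∈ range m, (((m-1-k).factorial : ℂ)) = ∏ k ∈ range m, ((k.factorial : ℂ)) from
    prod_range_reflect (fun k => ((k.factorial : ℂ))) m]
  rw [Ecard]
  set S := ∑ k ∈ range m, (k+1)
  set F := ∏ k ∈ range m, ((k.factorial : ℂ))
  set G := ∏ k ∈ range m, ∏ t ∈ range (k+1), (a*(t:ℂ) + a*c - b)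
  rw [show (-1:ℂ)^S * ((-1:ℂ)^m * ((-1:ℂ)^m * (m.factorial:ℂ) * ((-1:ℂ)^S * G * F)))
      = ((-1:ℂ)^S * (-1:ℂ)^S) * ((-1:ℂ)^m * (-1:ℂ)^m) * ((m.factorial:ℂ) * F * G) from by ring,
    neg_one_sq_pow, neg_one_sq_pow]
  ring

end asm

lemma hsplitIcc (f : ℕ → ℂ) (m i : ℕ) (him : i ≤ m) :
    ∏ s ∈ Icc 1 m, f s = (∏ s ∈ Icc 1 i, f s) * ∏ s ∈ Icc (i+1) m, f s := by
  rw [show (1:ℕ) = 0 + 1 from rfl, Finset.Icc_add_one_left_eq_Ioc, Finset.Icc_add_one_left_eq_Ioc, zero_add, Finset.Icc_add_one_left_eq_Ioc,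
    Finset.prod_Ioc_consecutive f (Nat.zero_le i) him]

theorem stmt1 (n : ℕ) (a b c : ℂ)
    (hden : ∀ s j : ℕ, 1 ≤ s → s ≤ n - 1 → 1 ≤ j → j ≤ n → (s : ℂ) + j + c ≠ 0)
    (hden2 : ∀ i : ℕ, 1 ≤ i → i ≤ n - 1 →
      ((i : ℂ) + 1 + c ≠ 0 ∧ 2 * (n : ℂ) - i + c ≠ 0)) :
    (Mmat n a b c).det =
      (∏ i ∈ Finset.Icc 1 (n - 1),
          (i.factorial : ℂ) * (a * ((i : ℂ) - 1) + a * c - b) ^ (n - i)) /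
        ∏ i ∈ Finset.Icc 1 (n - 1), ((i : ℂ) + 1 + c) ^ i * (2 * (n : ℂ) - i + c) ^ i := by
  rcases n with _ | m
  · simp [Mmat]
  simp only [Nat.add_sub_cancel] at hden hden2 ⊢
  -- the denominator multiplier for column j
  set Dj : Fin (m+1) → ℂ := fun j => ∏ s ∈ Icc 1 m, ((s:ℂ) + (((j:ℕ):ℂ) + 1) + c) with hDj
  have hdenel : ∀ (j : Fin (m+1)) (s : ℕ), s ∈ Icc 1 m → ((s:ℂ) + (((j:ℕ):ℂ) + 1) + c) ≠ 0 := by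
    intro j s hs
    rw [mem_Icc] at hs
    have := hden s ((j:ℕ)+1) hs.1 hs.2 (by omega) (by omega)
    push_cast at this
    convert this using 2
  have hAM : Am a b c m = Matrix.of (fun i j => Dj j * Mmat (m+1) a b c i j) := by
    ext i j
    simp only [Am, Matrix.of_apply, Pp_eval, Mmat, hDj]
    have h1 : ∏ s ∈ Icc 1 (i:ℕ), (a * (((j:ℕ):ℂ) + 1) + (a * (s:ℕ) + b))
        = ∏ s ∈ Icc 1 (i:ℕ), (a * ((s:ℂ) + (((j:ℕ):ℂ) + 1)) + b) :=
      prod_congr rfl fun s _ => by ring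
    have h2 : ∏ s ∈ Icc ((i:ℕ)+1) m, ((((j:ℕ):ℂ) + 1) + ((s:ℕ) + c))
        = ∏ s ∈ Icc ((i:ℕ)+1) m, ((s:ℂ) + (((j:ℕ):ℂ) + 1) + c) :=
      prod_congr rfl fun s _ => by ring
    have h3 : ∏ s ∈ Icc 1 (i:ℕ), ((a * ((s:ℂ) + (((j:ℕ):ℂ) + 1)) + b) / ((s:ℂ) + (((j:ℕ):ℂ) + 1) + c))
        = (∏ s ∈ Icc 1 (i:ℕ), (a * ((s:ℂ) + (((j:ℕ):ℂ) + 1)) + b))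
          / (∏ s ∈ Icc 1 (i:ℕ), ((s:ℂ) + (((j:ℕ):ℂ) + 1) + c)) := prod_div_distrib _ _
    have h4 := hsplitIcc (fun s => ((s:ℂ) + (((j:ℕ):ℂ) + 1) + c)) m (i:ℕ)
      (Nat.lt_succ_iff.mp i.isLt)
    have h5 : (∏ s ∈ Icc 1 (i:ℕ), ((s:ℂ) + (((j:ℕ):ℂ) + 1) + c)) ≠ 0 := by
      rw [Finset.prod_ne_zero_iff]
      intro s hs
      rw [mem_Icc] at hs
      exact hdenel j s (mem_Icc.mpr ⟨hs.1, le_trans hs.2 (Nat.lt_succ_iff.mp i.isLt)⟩)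
    rw [h1, h2, h3, h4]
    field_simp
  have hdet : (Am a b c m).det = (∏ j : Fin (m+1), Dj j) * (Mmat (m+1) a b c).det := by
    rw [hAM]
    exact Matrix.det_mul_row Dj (Mmat (m+1) a b c)
  -- identify D with the RHS denominator
  have hD : (∏ j : Fin (m+1), Dj j)
      = ∏ i ∈ Icc 1 m, ((i:ℂ) + 1 + c) ^ i * (2 * ((m:ℂ)+1) - i + c) ^ i := by
    have e1 : (∏ j : Fin (m+1), Dj j)
        = ∏ j ∈ range (m+1), ∏ s ∈ Icc 1 m, (((s + j + 1 : ℕ) : ℂ) + c) := by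
      rw [← Fin.prod_univ_eq_prod_range (fun j => ∏ s ∈ Icc 1 m, (((s + j + 1 : ℕ) : ℂ) + c)) (m+1)]
      refine Fintype.prod_congr _ _ fun j => prod_congr rfl fun s _ => by push_cast; ring
    rw [e1, denEq (fun k => ((k:ℕ):ℂ) + c) m]
    refine prod_congr rfl fun i hi => ?_
    rw [mem_Icc] at hi
    have c1 : (((i + 1 : ℕ)):ℂ) + c = (i:ℂ) + 1 + c := by push_cast; ring
    have c2 : (((2*(m+1) - i : ℕ)):ℂ) + c = 2 * ((m:ℂ)+1) - i + c := by
      push_cast [Nat.cast_sub (by omega : i ≤ 2*(m+1))]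
      try ring
    rw [c1, c2]
  have hDen : (∏ i ∈ Icc 1 m, ((i:ℂ) + 1 + c) ^ i * (2 * ((m:ℂ)+1) - i + c) ^ i) ≠ 0 := by
    rw [Finset.prod_ne_zero_iff]
    intro i hi
    rw [mem_Icc] at hi
    obtain ⟨w1, w2⟩ := hden2 i hi.1 hi.2
    push_cast at w2 ⊢
    exact mul_ne_zero (pow_ne_zero _ w1) (pow_ne_zero _ w2)
  -- identify det Am with the RHS numerator
  have hNum : (Am a b c m).det
      = ∏ i ∈ Icc 1 m, (i.factorial : ℂ) * (a * ((i:ℂ) - 1) + a * c - b) ^ (m + 1 - i) := by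
    rw [det_Am_val, prod_mul_distrib]
    congr 1
    · rw [← factProd]
    · rw [powProd (fun t => a*(t:ℂ) + a*c - b) m]
      rw [prodIccRange (fun i => (a * ((i:ℂ) - 1) + a * c - b) ^ (m + 1 - i)) m]
      refine prod_congr rfl fun k hk => ?_
      rw [mem_range] at hk
      rw [show m + 1 - (k+1) = m - k from by omega]
      congr 2
      push_cast
      ring
  -- conclude
  have key : (∏ i ∈ Icc 1 m, ((i:ℂ) + 1 + c) ^ i * (2 * ((m:ℂ)+1) - i + c) ^ i)
      * (Mmat (m+1) a b c).det
      = ∏ i ∈ Icc 1 m, (i.factorial : ℂ) * (a * ((i:ℂ) - 1) + a * c - b) ^ (m + 1 - i) := by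
    rw [← hD, ← hdet, hNum]
  rw [eq_div_iff ?_]
  · rw [mul_comm] at key
    convert key using 3 <;> push_cast <;> ring
  · convert hDen using 3 <;> push_cast <;> ring
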